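/- For every 2×2 matrix M with nonnegative integer entries and nonzero determinant, there exist a unique finite (possibly empty) list (M₁, …, Mₙ) with each Mᵢ ∈ {L₁, R₁} and a unique 2×2 matrix M₀ = [a₀ b₀; c₀ d₀] with nonnegative integer entries satisfying (a₀ < c₀ and b₀ > d₀) or (a₀ > c₀ and b₀ < d₀), such that M = M₁ · ⋯ · Mₙ · M₀. -/

import Mathlib

def L₁ : Matrix (Fin 2) (Fin 2) ℕ := !![1, 0; 1, 1]

def R₁ : Matrix (Fin 2) (Fin 2) ℕ := !![1, 1; 0, 1]

namespace St11

abbrev Mat := Matrix (Fin 2) (Fin 2) ℕ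

def D (M : Mat) : ℤ := (M 0 0 : ℤ) * M 1 1 - M 0 1 * M 1 0

def Term (N : Mat) : Prop := (N 0 0 < N 1 0 ∧ N 1 1 < N 0 1) ∨ (N 1 0 < N 0 0 ∧ N 0 1 < N 1 1)

def Valid (M : Mat) (p : List Mat × Mat) : Prop :=
  (∀ A ∈ p.1, A = L₁ ∨ A = R₁) ∧ Term p.2 ∧ M = p.1.prod * p.2

def meas (M : Mat) : ℕ := M 0 0 + M 0 1 + M 1 0 + M 1 1

lemma D_mul (A B : Mat) : D (A*B) = D A * D B := by
  simp only [D, Matrix.mul_apply, Fin.sum_univ_two]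
  push_cast; ring

lemma D_L : D L₁ = 1 := by simp [D, L₁]

lemma D_R : D R₁ = 1 := by simp [D, R₁]

lemma D_prod (l : List Mat) (h : ∀ A ∈ l, A = L₁ ∨ A = R₁) : D l.prod = 1 := by
  induction l with
  | nil => simp [D]
  | cons A t ih =>
    rw [List.prod_cons, D_mul, ih (fun B hB => h B (List.mem_cons_of_mem _ hB))]
    rcases h A (List.mem_cons_self) with hA | hA <;> simp [hA, D_L, D_R]

lemma term_D (N : Mat) (h : Term N) : D N ≠ 0 := by
  rcases h with ⟨h1, h2⟩ | ⟨h1, h2⟩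
  · have : (N 0 0 : ℤ) * N 1 1 < N 0 1 * N 1 0 := by
      have h1' : (N 0 0 : ℤ) < N 1 0 := by exact_mod_cast h1
      have h2' : (N 1 1 : ℤ) < N 0 1 := by exact_mod_cast h2
      nlinarith [Int.ofNat_nonneg (N 0 0), Int.ofNat_nonneg (N 1 1)]
    simp only [D]; omega
  · have : (N 0 1 : ℤ) * N 1 0 < N 0 0 * N 1 1 := by
      have h1' : (N 1 0 : ℤ) < N 0 0 := by exact_mod_cast h1
      have h2' : (N 0 1 : ℤ) < N 1 1 := by exact_mod_cast h2
      nlinarith [Int.ofNat_nonneg (N 0 1), Int.ofNat_nonneg (N 1 0)]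
    simp only [D]; omega

lemma valid_D (M : Mat) (p : List Mat × Mat) (h : Valid M p) : D M = D p.2 ∧ D M ≠ 0 := by
  obtain ⟨h1, h2, h3⟩ := h
  have he : D M = D p.2 := by rw [h3, D_mul, D_prod _ h1, one_mul]
  exact ⟨he, he ▸ term_D _ h2⟩

lemma L_apply (X : Mat) (j : Fin 2) : (L₁ * X) 0 j = X 0 j ∧ (L₁ * X) 1 j = X 0 j + X 1 j := by
  constructor <;> simp [L₁, Matrix.mul_apply, Fin.sum_univ_two]

lemma R_apply (X : Mat) (j : Fin 2) : (R₁ * X) 0 j = X 0 j + X 1 j ∧ (R₁ * X) 1 j = X 1 j := by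
  constructor <;> simp [R₁, Matrix.mul_apply, Fin.sum_univ_two]

lemma cancel_L (X Y : Mat) (h : L₁ * X = L₁ * Y) : X = Y := by
  ext i j
  have h0 := congrFun (congrFun h 0) j
  have h1 := congrFun (congrFun h 1) j
  rw [(L_apply X j).1, (L_apply Y j).1] at h0
  rw [(L_apply X j).2, (L_apply Y j).2] at h1
  fin_cases i
  · show X 0 j = Y 0 j; omega
  · show X 1 j = Y 1 j; omega

lemma cancel_R (X Y : Mat) (h : R₁ * X = R₁ * Y) : X = Y := by
  ext i j
  have h0 := congrFun (congrFun h 0) j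
  have h1 := congrFun (congrFun h 1) j
  rw [(R_apply X j).1, (R_apply Y j).1] at h0
  rw [(R_apply X j).2, (R_apply Y j).2] at h1
  fin_cases i
  · show X 0 j = Y 0 j; omega
  · show X 1 j = Y 1 j; omega

lemma row_ne (M : Mat) (h : D M ≠ 0) : (M 0 0 + M 0 1 ≠ 0) ∧ (M 1 0 + M 1 1 ≠ 0) := by
  constructor <;> intro hz
  · apply h
    have h1 : M 0 0 = 0 := by omega
    have h2 : M 0 1 = 0 := by omega
    simp [D, h1, h2]
  · apply h
    have h1 : M 1 0 = 0 := by omega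
    have h2 : M 1 1 = 0 := by omega
    simp [D, h1, h2]

lemma meas_L (X : Mat) : meas (L₁ * X) = meas X + (X 0 0 + X 0 1) := by
  simp only [meas, (L_apply X 0).1, (L_apply X 1).1, (L_apply X 0).2, (L_apply X 1).2]
  omega

lemma meas_R (X : Mat) : meas (R₁ * X) = meas X + (X 1 0 + X 1 1) := by
  simp only [meas, (R_apply X 0).1, (R_apply X 1).1, (R_apply X 0).2, (R_apply X 1).2]
  omega

lemma exists_valid : ∀ s : ℕ, ∀ M : Mat, meas M ≤ s → D M ≠ 0 → ∃ p, Valid M p := by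
  intro s
  induction s with
  | zero =>
    intro M hm hd
    exfalso
    have h1 := (row_ne M hd).1
    simp only [meas] at hm
    omega
  | succ n ih =>
    intro M hm hd
    by_cases ht : Term M
    · exact ⟨([], M), by simp, ht, by simp⟩
    · have hr := row_ne M hd
      have hcase : (M 1 0 ≤ M 0 0 ∧ M 1 1 ≤ M 0 1) ∨ (M 0 0 ≤ M 1 0 ∧ M 0 1 ≤ M 1 1) := by
        by_cases h1 : M 1 0 ≤ M 0 0 <;> by_cases h2 : M 1 1 ≤ M 0 1
        · exact Or.inl ⟨h1, h2⟩
        · have hx : M 0 0 ≤ M 1 0 := by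
            by_contra hx
            exact ht (Or.inr ⟨by omega, by omega⟩)
          exact Or.inr ⟨hx, by omega⟩
        · have hx : M 0 1 ≤ M 1 1 := by
            by_contra hx
            exact ht (Or.inl ⟨by omega, by omega⟩)
          exact Or.inr ⟨by omega, hx⟩
        · exact Or.inr ⟨by omega, by omega⟩
      rcases hcase with ⟨hc, hc2⟩ | ⟨hc, hc2⟩
      · -- R-step
        set X : Mat := !![M 0 0 - M 1 0, M 0 1 - M 1 1; M 1 0, M 1 1] with hX
        have hX00 : X 0 0 = M 0 0 - M 1 0 := by simp [hX]
        have hX01 : X 0 1 = M 0 1 - M 1 1 := by simp [hX]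
        have hX10 : X 1 0 = M 1 0 := by simp [hX]
        have hX11 : X 1 1 = M 1 1 := by simp [hX]
        have hfac : M = R₁ * X := by
          ext i j
          fin_cases i <;> fin_cases j
          · show M 0 0 = (R₁ * X) 0 0
            rw [(R_apply X 0).1, hX00, hX10]; omega
          · show M 0 1 = (R₁ * X) 0 1
            rw [(R_apply X 1).1, hX01, hX11]; omega
          · show M 1 0 = (R₁ * X) 1 0
            rw [(R_apply X 0).2, hX10]
          · show M 1 1 = (R₁ * X) 1 1
            rw [(R_apply X 1).2, hX11]
        have hDX : D X = D M := by
          simp only [D]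
          rw [hX00, hX01, hX10, hX11]
          push_cast [Nat.cast_sub hc, Nat.cast_sub hc2]
          ring
        have hmX : meas X ≤ n := by
          have h2 := hr.2
          simp only [meas] at hm ⊢
          rw [hX00, hX01, hX10, hX11]
          omega
        obtain ⟨p, hp1, hp2, hp3⟩ := ih X hmX (hDX ▸ hd)
        refine ⟨(R₁ :: p.1, p.2), ?_, hp2, ?_⟩
        · intro A hA
          rcases List.mem_cons.1 hA with h | h
          · exact Or.inr h
          · exact hp1 A h
        · rw [hfac, hp3, List.prod_cons, Matrix.mul_assoc]
      · -- L-step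
        set X : Mat := !![M 0 0, M 0 1; M 1 0 - M 0 0, M 1 1 - M 0 1] with hX
        have hX00 : X 0 0 = M 0 0 := by simp [hX]
        have hX01 : X 0 1 = M 0 1 := by simp [hX]
        have hX10 : X 1 0 = M 1 0 - M 0 0 := by simp [hX]
        have hX11 : X 1 1 = M 1 1 - M 0 1 := by simp [hX]
        have hfac : M = L₁ * X := by
          ext i j
          fin_cases i <;> fin_cases j
          · show M 0 0 = (L₁ * X) 0 0
            rw [(L_apply X 0).1, hX00]
          · show M 0 1 = (L₁ * X) 0 1
            rw [(L_apply X 1).1, hX01]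
          · show M 1 0 = (L₁ * X) 1 0
            rw [(L_apply X 0).2, hX00, hX10]; omega
          · show M 1 1 = (L₁ * X) 1 1
            rw [(L_apply X 1).2, hX01, hX11]; omega
        have hDX : D X = D M := by
          simp only [D]
          rw [hX00, hX01, hX10, hX11]
          push_cast [Nat.cast_sub hc, Nat.cast_sub hc2]
          ring
        have hmX : meas X ≤ n := by
          have h1 := hr.1
          simp only [meas] at hm ⊢
          rw [hX00, hX01, hX10, hX11]
          omega
        obtain ⟨p, hp1, hp2, hp3⟩ := ih X hmX (hDX ▸ hd)
        refine ⟨(L₁ :: p.1, p.2), ?_, hp2, ?_⟩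
        · intro A hA
          rcases List.mem_cons.1 hA with h | h
          · exact Or.inl h
          · exact hp1 A h
        · rw [hfac, hp3, List.prod_cons, Matrix.mul_assoc]

lemma term_not_L (M : Mat) (hM : Term M) (X : Mat) : M ≠ L₁ * X := by
  intro h
  have e00 := (L_apply X 0).1
  have e10 := (L_apply X 0).2
  have e01 := (L_apply X 1).1
  have e11 := (L_apply X 1).2
  rcases hM with ⟨ha, hb⟩ | ⟨ha, hb⟩ <;> rw [h] at ha hb <;> omega

lemma term_not_R (M : Mat) (hM : Term M) (X : Mat) : M ≠ R₁ * X := by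
  intro h
  have e00 := (R_apply X 0).1
  have e10 := (R_apply X 0).2
  have e01 := (R_apply X 1).1
  have e11 := (R_apply X 1).2
  rcases hM with ⟨ha, hb⟩ | ⟨ha, hb⟩ <;> rw [h] at ha hb <;> omega

lemma uniq_valid : ∀ s : ℕ, ∀ M : Mat, meas M ≤ s →
    ∀ p q, Valid M p → Valid M q → p = q := by
  intro s
  induction s with
  | zero =>
    intro M hm p q hp _
    exfalso
    have hd := (valid_D M p hp).2
    have h1 := (row_ne M hd).1
    simp only [meas] at hm
    omega
  | succ n ih =>
    intro M hm p q hp hq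
    obtain ⟨l1, N1⟩ := p
    obtain ⟨l2, N2⟩ := q
    obtain ⟨hp1, hp2, hp3⟩ := hp
    obtain ⟨hq1, hq2, hq3⟩ := hq
    have hd := (valid_D M (l1, N1) ⟨hp1, hp2, hp3⟩).2
    match l1, l2 with
    | [], [] =>
      simp only [List.prod_nil, one_mul] at hp3 hq3
      rw [← hp3, ← hq3]
    | [], B :: t =>
      exfalso
      simp only [List.prod_nil, one_mul] at hp3
      rw [hp3] at hq3
      rw [List.prod_cons, Matrix.mul_assoc] at hq3
      rcases hq1 B (List.mem_cons_self) with hB | hB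
      · exact term_not_L N1 hp2 _ (hB ▸ hq3)
      · exact term_not_R N1 hp2 _ (hB ▸ hq3)
    | A :: t, [] =>
      exfalso
      simp only [List.prod_nil, one_mul] at hq3
      rw [hq3] at hp3
      rw [List.prod_cons, Matrix.mul_assoc] at hp3
      rcases hp1 A (List.mem_cons_self) with hA | hA
      · exact term_not_L N2 hq2 _ (hA ▸ hp3)
      · exact term_not_R N2 hq2 _ (hA ▸ hp3)
    | A :: t1, B :: t2 =>
      rw [List.prod_cons, Matrix.mul_assoc] at hp3 hq3
      have hAB : A = B := by
        rcases hp1 A (List.mem_cons_self) with hA | hA <;>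
        rcases hq1 B (List.mem_cons_self) with hB | hB
        · rw [hA, hB]
        · exfalso
          apply hd
          have e1 : ∀ j, M 0 j = (t1.prod * N1) 0 j := fun j => by
            rw [hp3, hA]; exact (L_apply _ j).1
          have e2 : ∀ j, M 1 j = (t1.prod * N1) 0 j + (t1.prod * N1) 1 j := fun j => by
            rw [hp3, hA]; exact (L_apply _ j).2
          have f1 : ∀ j, M 0 j = (t2.prod * N2) 0 j + (t2.prod * N2) 1 j := fun j => by
            rw [hq3, hB]; exact (R_apply _ j).1
          have f2 : ∀ j, M 1 j = (t2.prod * N2) 1 j := fun j => by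
            rw [hq3, hB]; exact (R_apply _ j).2
          have r0 : M 0 0 = M 1 0 := by
            have := e1 0; have := e2 0; have := f1 0; have := f2 0; omega
          have r1 : M 0 1 = M 1 1 := by
            have := e1 1; have := e2 1; have := f1 1; have := f2 1; omega
          simp only [D, r0, r1]; ring
        · exfalso
          apply hd
          have e1 : ∀ j, M 0 j = (t1.prod * N1) 0 j + (t1.prod * N1) 1 j := fun j => by
            rw [hp3, hA]; exact (R_apply _ j).1
          have e2 : ∀ j, M 1 j = (t1.prod * N1) 1 j := fun j => by
            rw [hp3, hA]; exact (R_apply _ j).2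
          have f1 : ∀ j, M 0 j = (t2.prod * N2) 0 j := fun j => by
            rw [hq3, hB]; exact (L_apply _ j).1
          have f2 : ∀ j, M 1 j = (t2.prod * N2) 0 j + (t2.prod * N2) 1 j := fun j => by
            rw [hq3, hB]; exact (L_apply _ j).2
          have r0 : M 0 0 = M 1 0 := by
            have := e1 0; have := e2 0; have := f1 0; have := f2 0; omega
          have r1 : M 0 1 = M 1 1 := by
            have := e1 1; have := e2 1; have := f1 1; have := f2 1; omega
          simp only [D, r0, r1]; ring
        · rw [hA, hB]
      subst hAB
      have hcancel : t1.prod * N1 = t2.prod * N2 := by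
        rcases hp1 A (List.mem_cons_self) with hA | hA
        · exact cancel_L _ _ (by rw [← hA, ← hp3, ← hq3])
        · exact cancel_R _ _ (by rw [← hA, ← hp3, ← hq3])
      set X := t1.prod * N1 with hXdef
      have hvp : Valid X (t1, N1) :=
        ⟨fun C hC => hp1 C (List.mem_cons_of_mem _ hC), hp2, rfl⟩
      have hvq : Valid X (t2, N2) :=
        ⟨fun C hC => hq1 C (List.mem_cons_of_mem _ hC), hq2, hcancel⟩
      have hdX := (valid_D X (t1, N1) hvp).2
      obtain ⟨hr1, hr2⟩ := row_ne X hdX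
      have hmX : meas X ≤ n := by
        rcases hp1 A (List.mem_cons_self) with hA | hA
        · have hme := meas_L X
          rw [← hA, ← hp3] at hme
          omega
        · have hme := meas_R X
          rw [← hA, ← hp3] at hme
          omega
      have heq := ih X hmX (t1, N1) (t2, N2) hvp hvq
      simp only [Prod.mk.injEq] at heq
      rw [heq.1, heq.2]

end St11

theorem stmt_11 (M : Matrix (Fin 2) (Fin 2) ℕ)
    (hdet : (M 0 0 : ℤ) * M 1 1 - M 0 1 * M 1 0 ≠ 0) :
    ∃! p : List (Matrix (Fin 2) (Fin 2) ℕ) × Matrix (Fin 2) (Fin 2) ℕ,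
      (∀ A ∈ p.1, A = L₁ ∨ A = R₁) ∧
      ((p.2 0 0 < p.2 1 0 ∧ p.2 1 1 < p.2 0 1) ∨
        (p.2 1 0 < p.2 0 0 ∧ p.2 0 1 < p.2 1 1)) ∧
      M = p.1.prod * p.2 := by
  obtain ⟨p, hp⟩ := St11.exists_valid (St11.meas M) M le_rfl hdet
  refine ⟨p, ⟨hp.1, hp.2.1, hp.2.2⟩, ?_⟩
  intro q hq
  exact St11.uniq_valid (St11.meas M) M le_rfl q p ⟨hq.1, hq.2.1, hq.2.2⟩ hp
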